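/- Let G be a graph in which, under nonnegative edge weights q, every nonempty vertex subset S has weighted density (Σ_{e∈E(S)} q_e)/|S| strictly less than α. If at least half the edges e of G satisfy q_e ≥ 8α/d_u and q_e ≥ 8α/d_v for both endpoints u,v (where d_v is the degree of v in G), then a contradiction ensues; equivalently, in every such graph, fewer than half the edges fail the condition q_e < 8α/d_v at both endpoints. -/

import Mathlib

open scoped Classical
open Finset

namespace Stmt9Aux

variable {V : Type*} [Fintype V] [DecidableEq V]
variable (G : SimpleGraph V) [DecidableRel G.Adj] (q : Sym2 V → ℝ) (α : ℝ)

/-- An (ordered) pair of adjacent vertices whose edge is heavy at both endpoints. -/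
def Heavy (u v : V) : Prop :=
  G.Adj u v ∧ ∀ w ∈ (s(u, v) : Sym2 V), 8 * α / (G.degree w : ℝ) ≤ q s(u, v)

lemma heavy_symm {u v : V} (h : Heavy G q α u v) : Heavy G q α v u := by
  obtain ⟨h1, h2⟩ := h
  refine ⟨h1.symm, ?_⟩
  rw [Sym2.eq_swap]
  exact h2

lemma heavy_irrefl (v : V) : ¬ Heavy G q α v v := fun h => G.irrefl h.1

/-- The number of heavy neighbors of `v` inside `S`. -/
noncomputable def degH (S : Finset V) (v : V) : ℕ :=
  (S.filter (fun u => Heavy G q α v u)).card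

/-- Twice the number of heavy edges inside `S`. -/
noncomputable def m2 (S : Finset V) : ℕ := ∑ v ∈ S, degH G q α S v

lemma degH_insert (S : Finset V) {v : V} (hv : v ∉ S) (u : V) :
    degH G q α (insert v S) u = degH G q α S u + if Heavy G q α u v then 1 else 0 := by
  unfold degH
  rw [filter_insert]
  by_cases h : Heavy G q α u v
  · rw [if_pos h, if_pos h,
      card_insert_of_notMem (fun hc => hv (mem_of_mem_filter _ hc))]
  · rw [if_neg h, if_neg h, add_zero]

lemma degH_count (S : Finset V) (v : V) :
    (∑ u ∈ S, if Heavy G q α u v then 1 else 0) = degH G q α S v := by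
  rw [← sum_filter, sum_const, smul_eq_mul, mul_one]
  unfold degH
  congr 1
  exact filter_congr fun u _ => ⟨fun h => heavy_symm G q α h, fun h => heavy_symm G q α h⟩

lemma m2_insert (S : Finset V) {v : V} (hv : v ∉ S) :
    m2 G q α (insert v S) = m2 G q α S + 2 * degH G q α S v := by
  unfold m2
  rw [sum_insert hv]
  have h1 : degH G q α (insert v S) v = degH G q α S v := by
    rw [degH_insert G q α S hv v, if_neg (heavy_irrefl G q α v), add_zero]
  rw [h1, sum_congr rfl (fun u _ => degH_insert G q α S hv u), sum_add_distrib,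
    degH_count G q α S v]
  ring

lemma degH_filter_pos (S : Finset V) (v : V) :
    degH G q α (S.filter fun u => 0 < G.degree u) v = degH G q α S v := by
  unfold degH
  rw [filter_filter]
  congr 1
  refine filter_congr fun u hu => ⟨fun h => h.2, fun h => ⟨?_, h⟩⟩
  exact (G.degree_pos_iff_exists_adj u).mpr ⟨v, h.1.symm⟩

/-- Peeling argument: if at least as much degree mass lies in heavy pairs as total,
we find a nonempty induced sub(vertex)set where every vertex keeps a quarter of its degree. -/
lemma key : ∀ S : Finset V, 0 < m2 G q α S →
    (∑ v ∈ S, G.degree v) ≤ 2 * m2 G q α S →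
    ∃ T ⊆ S, 0 < m2 G q α T ∧ ∀ v ∈ T, G.degree v ≤ 4 * degH G q α T v := by
  intro S
  induction S using Finset.strongInductionOn with
  | _ S ih =>
    intro hpos hinv
    by_cases hall : ∀ v ∈ S, G.degree v ≤ 4 * degH G q α S v
    · exact ⟨S, Finset.Subset.refl S, hpos, hall⟩
    · push_neg at hall
      obtain ⟨v, hv, hlt⟩ := hall
      have hvn : v ∉ S.erase v := Finset.notMem_erase v S
      have hm2 : m2 G q α S = m2 G q α (S.erase v) + 2 * degH G q α (S.erase v) v := by
        conv_lhs => rw [← Finset.insert_erase hv]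
        exact m2_insert G q α (S.erase v) hvn
      have hdv : degH G q α S v = degH G q α (S.erase v) v := by
        conv_lhs => rw [← Finset.insert_erase hv]
        rw [degH_insert G q α (S.erase v) hvn v, if_neg (heavy_irrefl G q α v), add_zero]
      have hsum : (∑ u ∈ S.erase v, G.degree u) + G.degree v = ∑ u ∈ S, G.degree u :=
        Finset.sum_erase_add S _ hv
      rw [hdv] at hlt
      rw [hm2, ← hsum] at hinv
      have hpos' : 0 < m2 G q α (S.erase v) := by omega
      have hinv' : (∑ u ∈ S.erase v, G.degree u) ≤ 2 * m2 G q α (S.erase v) := by omega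
      obtain ⟨T, hT, h1, h2⟩ := ih (S.erase v) (Finset.erase_ssubset hv) hpos' hinv'
      exact ⟨T, hT.trans (Finset.erase_subset v S), h1, h2⟩

lemma m2_univ_eq : m2 G q α univ = 2 * (G.edgeFinset.filter
    (fun e => ∀ v ∈ e, 8 * α / (G.degree v : ℝ) ≤ q e)).card := by
  let G' : SimpleGraph V :=
    { Adj := fun u v => Heavy G q α u v
      symm := ⟨fun u v h => heavy_symm G q α h⟩
      loopless := ⟨fun v h => heavy_irrefl G q α v h⟩ }
  haveI : DecidableRel G'.Adj := fun u v => Classical.propDecidable _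
  have hdeg : ∀ v, G'.degree v = degH G q α univ v := by
    intro v
    rw [← SimpleGraph.card_neighborFinset_eq_degree, SimpleGraph.neighborFinset_eq_filter]
    unfold degH
    congr 1
    ext u
    simp only [mem_filter]
    exact Iff.rfl
  have hedge : G'.edgeFinset = G.edgeFinset.filter
      (fun e => ∀ v ∈ e, 8 * α / (G.degree v : ℝ) ≤ q e) := by
    ext e
    induction e with
    | h u v =>
      simp only [SimpleGraph.mem_edgeFinset, SimpleGraph.mem_edgeSet, mem_filter]
      exact Iff.rfl
  unfold m2
  rw [← hedge, ← G'.sum_degrees_eq_twice_card_edges]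
  exact sum_congr rfl fun v _ => (hdeg v).symm

end Stmt9Aux

/-- Halving-progress lemma for the light-edge-association rule: if every nonempty
vertex subset `S` has weighted density strictly less than `α` under nonnegative
edge weights `q`, then fewer than half the edges `e = {u,v}` satisfy
`q_e ≥ 8α/d_u` and `q_e ≥ 8α/d_v` at both endpoints. -/
theorem stmt9 {V : Type*} [Fintype V] [DecidableEq V]
    (G : SimpleGraph V) [DecidableRel G.Adj]
    (q : Sym2 V → ℝ) (hq : ∀ e, 0 ≤ q e) (α : ℝ)
    (hdens : ∀ S : Finset V, S.Nonempty →
      (1 / 2 : ℝ) * ∑ u ∈ S, ∑ v ∈ S, (if G.Adj u v then q s(u, v) else 0)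
        < α * (S.card : ℝ))
    (hE : G.edgeFinset.Nonempty) :
    2 * (G.edgeFinset.filter
        (fun e => ∀ v ∈ e, 8 * α / (G.degree v : ℝ) ≤ q e)).card
      < G.edgeFinset.card := by
  classical
  -- α is positive
  have hab : ∃ a b : V, G.Adj a b := by
    obtain ⟨e, he⟩ := hE
    rw [SimpleGraph.mem_edgeFinset] at he
    induction e with
    | h a b => exact ⟨a, b, he⟩
  obtain ⟨a, b, hadj⟩ := hab
  have hα : 0 < α := by
    have h := hdens {a} ⟨a, mem_singleton_self a⟩
    simpa [SimpleGraph.irrefl] using h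
  by_contra hcon
  push_neg at hcon
  have hm2univ := Stmt9Aux.m2_univ_eq G q α
  have hEpos : 0 < G.edgeFinset.card := card_pos.mpr hE
  have hpos : 0 < Stmt9Aux.m2 G q α univ := by omega
  have hinv : (∑ v ∈ univ, G.degree v) ≤ 2 * Stmt9Aux.m2 G q α univ := by
    rw [G.sum_degrees_eq_twice_card_edges]
    omega
  obtain ⟨T, -, hTpos, hTdeg⟩ := Stmt9Aux.key G q α univ hpos hinv
  -- restrict to positive-degree vertices
  set T' : Finset V := T.filter (fun u => 0 < G.degree u) with hT'def
  have hT'ne : T'.Nonempty := by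
    have : ∃ v ∈ T, 0 < Stmt9Aux.degH G q α T v := by
      by_contra h
      push_neg at h
      have : Stmt9Aux.m2 G q α T = 0 :=
        Finset.sum_eq_zero fun v hv => Nat.le_zero.mp (h v hv)
      omega
    obtain ⟨v, hvT, hvd⟩ := this
    obtain ⟨u, hu⟩ := Finset.card_pos.mp hvd
    have hH : Stmt9Aux.Heavy G q α v u := (Finset.mem_filter.mp hu).2
    have : 0 < G.degree v := (G.degree_pos_iff_exists_adj v).mpr ⟨u, hH.1⟩
    exact ⟨v, mem_filter.mpr ⟨hvT, this⟩⟩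
  have hT'deg : ∀ v ∈ T', G.degree v ≤ 4 * Stmt9Aux.degH G q α T' v := by
    intro v hv
    rw [hT'def, Stmt9Aux.degH_filter_pos]
    exact hTdeg v (mem_filter.mp hv).1
  -- the density contradiction on T'
  have hterm : ∀ u ∈ T', (2 * α) ≤ ∑ v ∈ T', (if G.Adj u v then q s(u, v) else 0) := by
    intro u hu
    have hdu : 0 < G.degree u := (mem_filter.mp hu).2
    have hdk : (G.degree u : ℝ) ≤ 4 * (Stmt9Aux.degH G q α T' u : ℝ) := by
      exact_mod_cast hT'deg u hu
    have hduR : (0 : ℝ) < (G.degree u : ℝ) := by exact_mod_cast hdu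
    have step1 : ∑ v ∈ T', (if Stmt9Aux.Heavy G q α u v then 8 * α / (G.degree u : ℝ) else 0)
        ≤ ∑ v ∈ T', (if G.Adj u v then q s(u, v) else 0) := by
      refine Finset.sum_le_sum fun v _ => ?_
      by_cases h : Stmt9Aux.Heavy G q α u v
      · rw [if_pos h, if_pos h.1]
        exact h.2 u (Sym2.mem_mk_left u v)
      · rw [if_neg h]
        by_cases h2 : G.Adj u v
        · rw [if_pos h2]; exact hq _
        · rw [if_neg h2]
    have step2 : ∑ v ∈ T', (if Stmt9Aux.Heavy G q α u v then 8 * α / (G.degree u : ℝ) else 0)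
        = (Stmt9Aux.degH G q α T' u : ℝ) * (8 * α / (G.degree u : ℝ)) := by
      rw [← sum_filter, sum_const, nsmul_eq_mul]
      rfl
    have step3 : 2 * α ≤ (Stmt9Aux.degH G q α T' u : ℝ) * (8 * α / (G.degree u : ℝ)) := by
      rw [mul_div_assoc' _ _ _, le_div_iff₀ hduR]
      nlinarith
    linarith [step1, step2 ▸ step3]
  have hbig : α * (T'.card : ℝ) ≤
      (1 / 2 : ℝ) * ∑ u ∈ T', ∑ v ∈ T', (if G.Adj u v then q s(u, v) else 0) := by
    have : (2 * α) * (T'.card : ℝ) ≤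
        ∑ u ∈ T', ∑ v ∈ T', (if G.Adj u v then q s(u, v) else 0) := by
      calc (2 * α) * (T'.card : ℝ) = ∑ _u ∈ T', (2 * α) := by
            rw [sum_const, nsmul_eq_mul]; ring
        _ ≤ _ := Finset.sum_le_sum hterm
    linarith
  have := hdens T' hT'ne
  linarith
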